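/- arXiv:1610.06000 — 2 statements merged into one kernel-verified Lean document; each statement's English description precedes it below -/
import Mathlib

section
/- If f, g : Ω → {0,1} are jointly monotone, then for any e ∈ E, ∑_{S : e ∈ S} f̂(S) ĝ(S) = p(1-p) P(e ∈ 𝒫_f ∩ 𝒫_g), where 𝒫_f(ω) is the set of bits pivotal for f at ω. -/
open scoped Classical
open Finset

/-- The product (Bernoulli-`p`) measure of a configuration `ω ∈ {0,1}^E`. -/
noncomputable def probCfg {E : Type*} [Fintype E] (p : ℝ) (ω : E → Bool) : ℝ :=
  ∏ e : E, if ω e then p else 1 - p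

/-- Expectation of `f : Ω → ℝ` under the product measure `P_p`. -/
noncomputable def bexpect {E : Type*} [Fintype E] [DecidableEq E]
    (p : ℝ) (f : (E → Bool) → ℝ) : ℝ :=
  ∑ ω : E → Bool, probCfg p ω * f ω

/-- `r_e(ω)`: the basic biased character of the single bit `e`. -/
noncomputable def rad (p : ℝ) {E : Type*} (ω : E → Bool) (e : E) : ℝ :=
  if ω e then Real.sqrt ((1 - p) / p) else -Real.sqrt (p / (1 - p))

/-- `χ_S(ω) = ∏_{e ∈ S} r_e(ω)`. -/
noncomputable def chi {E : Type*} (p : ℝ) (S : Finset E) (ω : E → Bool) : ℝ :=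
  ∏ e ∈ S, rad p ω e

/-- Biased Fourier coefficient `f̂(S) = E[f χ_S]`. -/
noncomputable def fhat {E : Type*} [Fintype E] [DecidableEq E]
    (p : ℝ) (f : (E → Bool) → ℝ) (S : Finset E) : ℝ :=
  bexpect p (fun ω => f ω * chi p S ω)

/-- `σ_e(ω)`: the configuration `ω` with the bit at `e` flipped. -/
def flipBit {E : Type*} [DecidableEq E] (e : E) (ω : E → Bool) : E → Bool :=
  Function.update ω e (!ω e)

section Aux

variable {E : Type*} [DecidableEq E]

lemma flip_apply_self (e : E) (ω : E → Bool) : flipBit e ω e = !ω e :=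
  Function.update_self _ _ _

lemma flip_apply_ne {a e : E} (h : a ≠ e) (ω : E → Bool) : flipBit e ω a = ω a :=
  Function.update_of_ne h _ _

lemma flipBit_flip_flip (e : E) (ω : E → Bool) : flipBit e (flipBit e ω) = ω := by
  funext a
  by_cases ha : a = e
  · subst ha; rw [flip_apply_self, flip_apply_self, Bool.not_not]
  · rw [flip_apply_ne ha, flip_apply_ne ha]

lemma flip_involutive (e : E) : Function.Involutive (flipBit (E := E) e) :=
  fun ω => flipBit_flip_flip e ω

lemma one_add_rad_mul {p : ℝ} (hp0 : 0 < p) (hp1 : p < 1)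
    (ω ω' : E → Bool) (a : E) :
    1 + rad p ω a * rad p ω' a =
      if ω a = ω' a then (if ω a then 1/p else 1/(1-p)) else 0 := by
  have hq : (0:ℝ) < 1 - p := by linarith
  have hsa : Real.sqrt ((1-p)/p) * Real.sqrt ((1-p)/p) = (1-p)/p :=
    Real.mul_self_sqrt (le_of_lt (div_pos hq hp0))
  have hsb : Real.sqrt (p/(1-p)) * Real.sqrt (p/(1-p)) = p/(1-p) :=
    Real.mul_self_sqrt (le_of_lt (div_pos hp0 hq))
  have hab : Real.sqrt ((1-p)/p) * Real.sqrt (p/(1-p)) = 1 := by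
    rw [← Real.sqrt_mul (le_of_lt (div_pos hq hp0))]
    rw [show (1-p)/p * (p/(1-p)) = 1 by field_simp]
    exact Real.sqrt_one
  unfold rad
  cases hb : ω a <;> cases hb' : ω' a <;>
    simp only [hb, hb', if_true, if_false, Bool.false_eq_true, Bool.true_eq_false,
      neg_mul_neg, mul_neg, neg_mul, if_pos rfl]
  · rw [hsb]; field_simp; ring
  · rw [mul_comm, hab]; ring
  · rw [hab]; ring
  · rw [hsa]; field_simp; ring

lemma rad_mul_self {p : ℝ} (hp0 : 0 < p) (hp1 : p < 1) (ω : E → Bool) (e : E) :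
    rad p ω e * rad p ω e = if ω e then (1-p)/p else p/(1-p) := by
  have hq : (0:ℝ) < 1 - p := by linarith
  unfold rad
  cases hb : ω e <;> simp only [hb, if_true, if_false, Bool.false_eq_true, neg_mul_neg]
  · exact Real.mul_self_sqrt (le_of_lt (div_pos hp0 hq))
  · exact Real.mul_self_sqrt (le_of_lt (div_pos hq hp0))

lemma rad_mul_flip {p : ℝ} (hp0 : 0 < p) (hp1 : p < 1) (ω : E → Bool) (e : E) :
    rad p ω e * rad p (flipBit e ω) e = -1 := by
  have hq : (0:ℝ) < 1 - p := by linarith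
  have hab : Real.sqrt ((1-p)/p) * Real.sqrt (p/(1-p)) = 1 := by
    rw [← Real.sqrt_mul (le_of_lt (div_pos hq hp0))]
    rw [show (1-p)/p * (p/(1-p)) = 1 by field_simp]
    exact Real.sqrt_one
  unfold rad
  rw [flip_apply_self]
  cases hb : ω e <;>
    simp only [hb, Bool.not_true, Bool.not_false, if_true, if_false,
      Bool.false_eq_true, mul_neg, neg_mul]
  · rw [mul_comm, hab]
  · rw [hab]

lemma eq_or_flip {e : E} {ω ω' : E → Bool} (h : ∀ a, a ≠ e → ω a = ω' a) :
    ω' = ω ∨ ω' = flipBit e ω := by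
  by_cases hb : ω' e = ω e
  · left; funext a
    by_cases ha : a = e
    · subst ha; exact hb
    · exact (h a ha).symm
  · right; funext a
    by_cases ha : a = e
    · subst ha
      rw [flip_apply_self]
      cases hω : ω a <;> cases hω' : ω' a <;> simp_all
    · rw [flip_apply_ne ha]; exact (h a ha).symm

end Aux

section AuxF

variable {E : Type*} [Fintype E] [DecidableEq E]

lemma kernel_eq {p : ℝ} (e : E) (ω ω' : E → Bool) :
    ∑ S ∈ Finset.univ.filter (fun S : Finset E => e ∈ S), chi p S ω * chi p S ω'
      = rad p ω e * rad p ω' e *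
        ∏ a ∈ Finset.univ.erase e, (1 + rad p ω a * rad p ω' a) := by
  have hexp : ∏ a ∈ Finset.univ.erase e, (1 + rad p ω a * rad p ω' a)
      = ∑ t ∈ (Finset.univ.erase e).powerset, ∏ a ∈ t, rad p ω a * rad p ω' a := by
    rw [Finset.prod_add]
    refine Finset.sum_nbij' (fun t => (Finset.univ.erase e) \ t)
      (fun t => (Finset.univ.erase e) \ t) ?_ ?_ ?_ ?_ ?_
    · intro t ht; simp_all [Finset.mem_powerset]
    · intro t ht; simp_all [Finset.mem_powerset]
    · intro t ht
      rw [Finset.mem_powerset] at ht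
      show Finset.univ.erase e \ (Finset.univ.erase e \ t) = t
      rw [Finset.sdiff_sdiff_self_left, Finset.inter_eq_right.2 ht]
    · intro t ht
      rw [Finset.mem_powerset] at ht
      show Finset.univ.erase e \ (Finset.univ.erase e \ t) = t
      rw [Finset.sdiff_sdiff_self_left, Finset.inter_eq_right.2 ht]
    · intro t ht; simp
  rw [hexp, Finset.mul_sum]
  refine Finset.sum_nbij' (fun S => S.erase e) (fun t => insert e t) ?_ ?_ ?_ ?_ ?_
  · intro S hS
    simp only [Finset.mem_filter, Finset.mem_univ, true_and] at hS
    simp [Finset.mem_powerset, Finset.erase_subset_erase, Finset.subset_univ]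
  · intro t ht; simp
  · intro S hS
    simp only [Finset.mem_filter, Finset.mem_univ, true_and] at hS
    exact Finset.insert_erase hS
  · intro t ht
    rw [Finset.mem_powerset] at ht
    have : e ∉ t := fun h => (Finset.mem_erase.1 (ht h)).1 rfl
    exact Finset.erase_insert this
  · intro S hS
    simp only [Finset.mem_filter, Finset.mem_univ, true_and] at hS
    have he' : e ∉ S.erase e := Finset.notMem_erase e S
    unfold chi
    show _ = rad p ω e * rad p ω' e * ∏ a ∈ S.erase e, rad p ω a * rad p ω' a
    rw [← Finset.prod_mul_distrib,
      ← Finset.mul_prod_erase _ (fun a => rad p ω a * rad p ω' a) hS]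

end AuxF

/-- If `f, g : Ω → {0,1}` are jointly monotone, then for any bit `e`,
`∑_{S : e ∈ S} f̂(S) ĝ(S) = p(1-p) P(e ∈ 𝒫_f ∩ 𝒫_g)`,
where `𝒫_f(ω)` is the set of bits pivotal for `f` at `ω`. -/
theorem sum_fourier_pivotal {E : Type*} [Fintype E] [DecidableEq E] {p : ℝ}
    (hp0 : 0 < p) (hp1 : p < 1) (f g : (E → Bool) → ℝ)
    (hf01 : ∀ ω, f ω = 0 ∨ f ω = 1) (hg01 : ∀ ω, g ω = 0 ∨ g ω = 1)
    (hmono : ∀ (e : E) (ω : E → Bool),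
      0 ≤ (f ω - f (flipBit e ω)) * (g ω - g (flipBit e ω)))
    (e : E) :
    ∑ S ∈ Finset.univ.filter (fun S : Finset E => e ∈ S), fhat p f S * fhat p g S
      = p * (1 - p) *
        bexpect p (fun ω =>
          if f (flipBit e ω) ≠ f ω ∧ g (flipBit e ω) ≠ g ω then 1 else 0) := by
  classical
  have hq : (0:ℝ) < 1 - p := by linarith
  have hp0' : p ≠ 0 := ne_of_gt hp0
  have hq' : (1:ℝ) - p ≠ 0 := ne_of_gt hq
  set moff : (E → Bool) → ℝ :=
    fun ω => ∏ a ∈ Finset.univ.erase e, (if ω a then p else 1 - p) with hmoff_def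
  set Pw : (E → Bool) → ℝ :=
    fun ω => ∏ a ∈ Finset.univ.erase e, (if ω a then 1/p else 1/(1-p)) with hPw_def
  -- basic facts
  have hμ : ∀ ω : E → Bool,
      probCfg p ω = (if ω e then p else 1 - p) * moff ω := by
    intro ω
    exact (Finset.mul_prod_erase Finset.univ _ (Finset.mem_univ e)).symm
  have hmoffσ : ∀ ω : E → Bool, moff (flipBit e ω) = moff ω := by
    intro ω
    refine Finset.prod_congr rfl fun a ha => ?_
    rw [flip_apply_ne (Finset.mem_erase.1 ha).1]
  have hμσ : ∀ ω : E → Bool,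
      probCfg p (flipBit e ω) = (if ω e then 1 - p else p) * moff ω := by
    intro ω
    rw [hμ (flipBit e ω), hmoffσ, flip_apply_self]
    cases hb : ω e <;> simp [hb]
  have hmw : ∀ ω : E → Bool, moff ω * Pw ω = 1 := by
    intro ω
    rw [hmoff_def, hPw_def, ← Finset.prod_mul_distrib]
    refine Finset.prod_eq_one fun a _ => ?_
    cases hb : ω a <;> simp [hb] <;> field_simp
  -- Step 1: expand the LHS into a double sum with the kernel
  have h1 : ∑ S ∈ Finset.univ.filter (fun S : Finset E => e ∈ S),
        fhat p f S * fhat p g S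
      = ∑ ω : E → Bool, ∑ ω' : E → Bool,
          (probCfg p ω * f ω) * (probCfg p ω' * g ω') *
            (rad p ω e * rad p ω' e *
              ∏ a ∈ Finset.univ.erase e,
                (if ω a = ω' a then (if ω a then 1/p else 1/(1-p)) else 0)) := by
    have e1 : ∀ S ∈ Finset.univ.filter (fun S : Finset E => e ∈ S),
        fhat p f S * fhat p g S
          = ∑ ω : E → Bool, ∑ ω' : E → Bool,
              (probCfg p ω * f ω) * (probCfg p ω' * g ω') *
                (chi p S ω * chi p S ω') := by
      intro S _
      unfold fhat bexpect
      rw [Finset.sum_mul_sum]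
      exact Finset.sum_congr rfl fun ω _ =>
        Finset.sum_congr rfl fun ω' _ => by ring
    rw [Finset.sum_congr rfl e1, Finset.sum_comm]
    refine Finset.sum_congr rfl fun ω _ => ?_
    rw [Finset.sum_comm]
    refine Finset.sum_congr rfl fun ω' _ => ?_
    rw [← Finset.mul_sum, kernel_eq]
    congr 1
    congr 1
    exact Finset.prod_congr rfl fun a _ => one_add_rad_mul hp0 hp1 ω ω' a
  rw [h1]
  -- Step 2: collapse the inner sum
  have h2 : ∀ ω : E → Bool,
      (∑ ω' : E → Bool,
          (probCfg p ω * f ω) * (probCfg p ω' * g ω') *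
            (rad p ω e * rad p ω' e *
              ∏ a ∈ Finset.univ.erase e,
                (if ω a = ω' a then (if ω a then 1/p else 1/(1-p)) else 0)))
        = p * (1 - p) * moff ω * (f ω * (g ω - g (flipBit e ω))) := by
    intro ω
    have hne : ω ≠ flipBit e ω := by
      intro h
      have := congrFun h e
      rw [flip_apply_self] at this
      cases hb : ω e <;> simp [hb] at this
    have hvanish : ∀ ω' : E → Bool,
        ω' ∉ ({ω, flipBit e ω} : Finset (E → Bool)) →
        (probCfg p ω * f ω) * (probCfg p ω' * g ω') *
            (rad p ω e * rad p ω' e *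
              ∏ a ∈ Finset.univ.erase e,
                (if ω a = ω' a then (if ω a then 1/p else 1/(1-p)) else 0)) = 0 := by
      intro ω' hω'
      simp only [Finset.mem_insert, Finset.mem_singleton] at hω'
      push_neg at hω'
      have : ¬ (∀ a, a ≠ e → ω a = ω' a) := by
        intro h
        rcases eq_or_flip h with h' | h'
        · exact hω'.1 h'
        · exact hω'.2 h'
      push_neg at this
      obtain ⟨a, ha, hne'⟩ := this
      have hmem : a ∈ Finset.univ.erase e := Finset.mem_erase.2 ⟨ha, Finset.mem_univ a⟩
      have hz : (if ω a = ω' a then (if ω a then 1/p else 1/(1-p)) else (0:ℝ)) = 0 :=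
        if_neg hne'
      rw [Finset.prod_eq_zero hmem hz]
      ring
    have hsub : (∑ ω' : E → Bool,
          (probCfg p ω * f ω) * (probCfg p ω' * g ω') *
            (rad p ω e * rad p ω' e *
              ∏ a ∈ Finset.univ.erase e,
                (if ω a = ω' a then (if ω a then 1/p else 1/(1-p)) else 0)))
        = ∑ ω' ∈ ({ω, flipBit e ω} : Finset (E → Bool)),
          (probCfg p ω * f ω) * (probCfg p ω' * g ω') *
            (rad p ω e * rad p ω' e *
              ∏ a ∈ Finset.univ.erase e,
                (if ω a = ω' a then (if ω a then 1/p else 1/(1-p)) else 0)) :=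
      (Finset.sum_subset (Finset.subset_univ _) (fun x _ hx => hvanish x hx)).symm
    rw [hsub, Finset.sum_pair hne]
    -- evaluate the two terms
    have hprod_self : (∏ a ∈ Finset.univ.erase e,
        (if ω a = ω a then (if ω a then 1/p else 1/(1-p)) else 0)) = Pw ω :=
      Finset.prod_congr rfl fun a _ => if_pos rfl
    have hprod_flip : (∏ a ∈ Finset.univ.erase e,
        (if ω a = flipBit e ω a then (if ω a then 1/p else 1/(1-p)) else 0)) = Pw ω :=
      Finset.prod_congr rfl fun a ha =>
        if_pos (flip_apply_ne (Finset.mem_erase.1 ha).1 ω).symm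
    have hme2 : ((if ω e then p else 1-p) * (if ω e then p else 1-p)) *
        (rad p ω e * rad p ω e) = p * (1-p) := by
      rw [rad_mul_self hp0 hp1]
      cases hb : ω e <;> simp only [hb, if_true, if_false, Bool.false_eq_true] <;>
        field_simp <;> ring
    have hmm' : (if ω e then p else 1-p) * (if ω e then 1-p else p) = p * (1-p) := by
      cases hb : ω e <;> simp [hb] <;> ring
    rw [hprod_self, hprod_flip, rad_mul_flip hp0 hp1]
    rw [hμ ω, hμσ ω]
    have hmw' := hmw ω
    linear_combination
      (moff ω * moff ω * Pw ω * f ω * g ω) * hme2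
        + (p * (1-p) * moff ω * f ω * g ω) * hmw'
        - (moff ω * moff ω * Pw ω * f ω * g (flipBit e ω)) * hmm'
        - (p * (1-p) * moff ω * f ω * g (flipBit e ω)) * hmw'
  rw [Finset.sum_congr rfl fun ω _ => h2 ω]
  -- Step 3: the right-hand side
  unfold bexpect
  rw [Finset.mul_sum]
  -- pointwise indicator identity
  have hIpt : ∀ ω : E → Bool,
      (if f (flipBit e ω) ≠ f ω ∧ g (flipBit e ω) ≠ g ω then (1:ℝ) else 0)
        = (f ω - f (flipBit e ω)) * (g ω - g (flipBit e ω)) := by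
    intro ω
    have hm := hmono e ω
    rcases hf01 ω with h1 | h1 <;> rcases hf01 (flipBit e ω) with h2 | h2 <;>
      rcases hg01 ω with h3 | h3 <;> rcases hg01 (flipBit e ω) with h4 | h4 <;>
      rw [h1, h2, h3, h4] at hm ⊢ <;> revert hm <;> norm_num
  -- symmetrization
  have hbij : Function.Bijective (flipBit (E := E) e) := (flip_involutive e).bijective
  have hA : ∀ (h : (E → Bool) → ℝ),
      ∑ ω : E → Bool, h (flipBit e ω) = ∑ ω : E → Bool, h ω :=
    fun h => Fintype.sum_bijective _ hbij _ _ (fun ω => rfl)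
  have key : ∑ ω : E → Bool, p * (1-p) * moff ω * (f ω * (g ω - g (flipBit e ω)))
      = ∑ ω : E → Bool, p * (1-p) *
          (probCfg p ω * (if f (flipBit e ω) ≠ f ω ∧ g (flipBit e ω) ≠ g ω then 1 else 0)) := by
    have hL2 : (2:ℝ) * ∑ ω : E → Bool, p * (1-p) * moff ω * (f ω * (g ω - g (flipBit e ω)))
        = ∑ ω : E → Bool, p * (1-p) * moff ω *
            ((f ω - f (flipBit e ω)) * (g ω - g (flipBit e ω))) := by
      have hre : ∑ ω : E → Bool, p * (1-p) * moff ω * (f ω * (g ω - g (flipBit e ω)))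
          = ∑ ω : E → Bool, p * (1-p) * moff ω *
              (f (flipBit e ω) * (g (flipBit e ω) - g ω)) := by
        conv_lhs => rw [← hA (fun ω => p * (1-p) * moff ω * (f ω * (g ω - g (flipBit e ω))))]
        refine Finset.sum_congr rfl fun ω _ => ?_
        rw [hmoffσ, flipBit_flip_flip]
      rw [two_mul]
      nth_rewrite 2 [hre]
      rw [← Finset.sum_add_distrib]
      refine Finset.sum_congr rfl fun ω _ => by ring
    have hR2 : (2:ℝ) * ∑ ω : E → Bool, p * (1-p) *
          (probCfg p ω * (if f (flipBit e ω) ≠ f ω ∧ g (flipBit e ω) ≠ g ω then 1 else 0))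
        = ∑ ω : E → Bool, p * (1-p) * moff ω *
            ((f ω - f (flipBit e ω)) * (g ω - g (flipBit e ω))) := by
      have hIσ : ∀ ω : E → Bool,
          (if f (flipBit e (flipBit e ω)) ≠ f (flipBit e ω)
              ∧ g (flipBit e (flipBit e ω)) ≠ g (flipBit e ω) then (1:ℝ) else 0)
            = (if f (flipBit e ω) ≠ f ω ∧ g (flipBit e ω) ≠ g ω then (1:ℝ) else 0) := by
        intro ω
        rw [flipBit_flip_flip]
        exact if_congr
          ⟨fun h => ⟨h.1.symm, h.2.symm⟩, fun h => ⟨h.1.symm, h.2.symm⟩⟩ rfl rfl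
      have hre : ∑ ω : E → Bool, p * (1-p) *
            (probCfg p ω * (if f (flipBit e ω) ≠ f ω ∧ g (flipBit e ω) ≠ g ω then (1:ℝ) else 0))
          = ∑ ω : E → Bool, p * (1-p) *
            ((if ω e then 1-p else p) * moff ω *
              (if f (flipBit e ω) ≠ f ω ∧ g (flipBit e ω) ≠ g ω then (1:ℝ) else 0)) := by
        conv_lhs => rw [← hA (fun ω => p * (1-p) *
            (probCfg p ω * (if f (flipBit e ω) ≠ f ω ∧ g (flipBit e ω) ≠ g ω then (1:ℝ) else 0)))]
        refine Finset.sum_congr rfl fun ω _ => ?_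
        rw [hIσ ω, hμσ ω]
      rw [two_mul]
      nth_rewrite 2 [hre]
      rw [← Finset.sum_add_distrib]
      refine Finset.sum_congr rfl fun ω _ => ?_
      rw [hμ ω, ← hIpt ω]
      cases hb : ω e <;> simp only [hb, if_true, if_false, Bool.false_eq_true] <;> ring
    have := hL2.trans hR2.symm
    linarith
  rw [key]
end

section
/- FKG comparison of noise correlations: Suppose f, g : Ω → ℝ are square-integrable and both f and g - f are increasing. Then for any ε ∈ [0,1], E[g(ω)g(ω_ε)] - E[g(ω)]² ≥ E[f(ω)f(ω_ε)] - E[f(ω)]². -/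
open scoped Classical
open Finset

/-- Transition kernel of ε-noise: each bit is kept with probability `1-ε`, and
rerandomized to a fresh Bernoulli(`p`) bit with probability `ε`, independently. -/
noncomputable def noiseKernel {E : Type*} [Fintype E] (p ε : ℝ) (ω ω' : E → Bool) : ℝ :=
  ∏ e : E, ((1 - ε) * (if ω' e = ω e then 1 else 0) + ε * (if ω' e then p else 1 - p))

/-- `E[f(ω) g(ω_ε)]`, averaging over `ω ∼ P_p` and the independent noise. -/
noncomputable def noisedExpect {E : Type*} [Fintype E] [DecidableEq E]
    (p ε : ℝ) (f g : (E → Bool) → ℝ) : ℝ :=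
  ∑ ω : E → Bool, ∑ ω' : E → Bool, probCfg p ω * noiseKernel p ε ω ω' * (f ω * g ω')

/-- Per-coordinate weight of the joint distribution of `(ω, ω_ε)`. -/
noncomputable def pairw (p ε : ℝ) (x y : Bool) : ℝ :=
  (if x then p else 1 - p) * ((1 - ε) * (if y = x then 1 else 0) + ε * (if y then p else 1 - p))

section aux
variable {E : Type*} [Fintype E] [DecidableEq E] {p ε : ℝ}

set_option linter.unusedSectionVars false
set_option linter.unusedVariables false

lemma sum_pi_bool (F : E → Bool → ℝ) :
    ∑ ω : E → Bool, ∏ e, F e (ω e) = ∏ e, (F e true + F e false) := by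
  rw [← Fintype.prod_sum F]
  exact Finset.prod_congr rfl fun e _ => by simp

lemma nu_eq (ω ω' : E → Bool) :
    probCfg p ω * noiseKernel p ε ω ω' = ∏ e, pairw p ε (ω e) (ω' e) := by
  rw [probCfg, noiseKernel, ← Finset.prod_mul_distrib]; rfl

lemma pairw_nonneg (hp0 : 0 ≤ p) (hp1 : p ≤ 1) (hε0 : 0 ≤ ε) (hε1 : ε ≤ 1) (x y : Bool) :
    0 ≤ pairw p ε x y := by
  have h1 : (0:ℝ) ≤ 1 - p := by linarith
  cases x <;> cases y <;> simp [pairw] <;>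
    nlinarith [mul_nonneg hε0 h1, mul_nonneg hε0 hp0, mul_nonneg h1 (mul_nonneg hε0 hp0),
      mul_nonneg hp0 (mul_nonneg hε0 h1), mul_nonneg h1 (mul_nonneg hε0 h1),
      mul_nonneg hp0 (mul_nonneg hε0 hp0), mul_nonneg h1 (sub_nonneg.2 hε1),
      mul_nonneg hp0 (sub_nonneg.2 hε1)]

lemma pairw_supermod (hp0 : 0 ≤ p) (hp1 : p ≤ 1) (hε0 : 0 ≤ ε) (hε1 : ε ≤ 1)
    (x y x' y' : Bool) :
    pairw p ε x y * pairw p ε x' y' ≤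
      pairw p ε (x ⊓ x') (y ⊓ y') * pairw p ε (x ⊔ x') (y ⊔ y') := by
  have h1 : (0:ℝ) ≤ 1 - p := by linarith
  cases x <;> cases y <;> cases x' <;> cases y' <;>
    simp [pairw, Bool.inf_eq_band, Bool.sup_eq_bor] <;>
    nlinarith [mul_nonneg (mul_nonneg hp0 h1) (sub_nonneg.2 hε1)]

lemma sum_probCfg : ∑ ω : E → Bool, probCfg p ω = 1 := by
  simp only [probCfg]
  rw [sum_pi_bool (fun e b => if b then p else 1 - p)]
  simp

lemma sum_noiseKernel (ω : E → Bool) : ∑ ω' : E → Bool, noiseKernel p ε ω ω' = 1 := by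
  simp only [noiseKernel]
  rw [sum_pi_bool
    (fun e b => (1 - ε) * (if b = ω e then 1 else 0) + ε * (if b then p else 1 - p))]
  refine Finset.prod_eq_one fun e _ => ?_
  cases ω e <;> simp <;> ring

lemma nu_symm (ω ω' : E → Bool) :
    probCfg p ω * noiseKernel p ε ω ω' = probCfg p ω' * noiseKernel p ε ω' ω := by
  rw [nu_eq, nu_eq]
  refine Finset.prod_congr rfl fun e _ => ?_
  cases ω e <;> cases ω' e <;> simp [pairw] <;> ring

lemma nu_marg1 (ω : E → Bool) :
    ∑ ω' : E → Bool, probCfg p ω * noiseKernel p ε ω ω' = probCfg p ω := by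
  rw [← Finset.mul_sum, sum_noiseKernel, mul_one]

lemma sum_nu : ∑ ω : E → Bool, ∑ ω' : E → Bool, probCfg p ω * noiseKernel p ε ω ω' = 1 := by
  have : ∀ ω : E → Bool, ∑ ω' : E → Bool, probCfg p ω * noiseKernel p ε ω ω' = probCfg p ω :=
    nu_marg1
  rw [Finset.sum_congr rfl fun ω _ => this ω, sum_probCfg]

lemma sum_nu_left (f : (E → Bool) → ℝ) :
    ∑ ω : E → Bool, ∑ ω' : E → Bool, probCfg p ω * noiseKernel p ε ω ω' * f ω
      = bexpect p f := by
  rw [bexpect]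
  refine Finset.sum_congr rfl fun ω _ => ?_
  rw [← Finset.sum_mul, nu_marg1]

lemma sum_nu_right (h : (E → Bool) → ℝ) :
    ∑ ω : E → Bool, ∑ ω' : E → Bool, probCfg p ω * noiseKernel p ε ω ω' * h ω'
      = bexpect p h := by
  rw [Finset.sum_comm]
  have step : ∀ ω' ω : E → Bool, probCfg p ω * noiseKernel p ε ω ω' * h ω'
      = probCfg p ω' * noiseKernel p ε ω' ω * h ω' := fun ω' ω => by rw [nu_symm ω ω']
  calc ∑ ω' : E → Bool, ∑ ω : E → Bool, probCfg p ω * noiseKernel p ε ω ω' * h ω'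
      = ∑ ω' : E → Bool, ∑ ω : E → Bool, probCfg p ω' * noiseKernel p ε ω' ω * h ω' :=
        Finset.sum_congr rfl fun ω' _ => Finset.sum_congr rfl fun ω _ => step ω' ω
    _ = bexpect p h := sum_nu_left h

lemma noisedExpect_symm (f h : (E → Bool) → ℝ) :
    noisedExpect p ε f h = noisedExpect p ε h f := by
  rw [noisedExpect, noisedExpect, Finset.sum_comm]
  refine Finset.sum_congr rfl fun ω' _ => Finset.sum_congr rfl fun ω _ => ?_
  rw [nu_symm]
  ring

/-- Shifting by constants. -/
lemma bexpect_sub_const (f : (E → Bool) → ℝ) (c : ℝ) :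
    bexpect p (fun ω => f ω - c) = bexpect p f - c := by
  rw [bexpect, bexpect]
  simp only [mul_sub]
  rw [Finset.sum_sub_distrib, ← Finset.sum_mul, sum_probCfg, one_mul]

lemma noised_shift (f h : (E → Bool) → ℝ) (c d : ℝ) :
    noisedExpect p ε (fun ω => f ω - c) (fun ω => h ω - d)
      = noisedExpect p ε f h - d * bexpect p f - c * bexpect p h + c * d := by
  rw [noisedExpect]
  have expand : ∀ ω ω' : E → Bool,
      probCfg p ω * noiseKernel p ε ω ω' * ((f ω - c) * (h ω' - d))
        = probCfg p ω * noiseKernel p ε ω ω' * (f ω * h ω')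
          - d * (probCfg p ω * noiseKernel p ε ω ω' * f ω)
          - c * (probCfg p ω * noiseKernel p ε ω ω' * h ω')
          + (c * d) * (probCfg p ω * noiseKernel p ε ω ω') := fun ω ω' => by ring
  simp only [expand, Finset.sum_add_distrib, Finset.sum_sub_distrib, ← Finset.mul_sum]
  rw [show (∑ ω : E → Bool, ∑ ω' : E → Bool,
      probCfg p ω * noiseKernel p ε ω ω' * (f ω * h ω')) = noisedExpect p ε f h from rfl]
  rw [sum_nu_left f, sum_nu_right h]
  simp only [sum_noiseKernel, mul_one, sum_probCfg]

/-- Harris/FKG inequality for the joint distribution of `(ω, ω_ε)` applied to a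
pair of increasing functions. -/
lemma cov_noised_nonneg (hp0 : 0 < p) (hp1 : p < 1) (hε0 : 0 ≤ ε) (hε1 : ε ≤ 1)
    (f h : (E → Bool) → ℝ)
    (hf : ∀ ω ω' : E → Bool, (∀ e, ω e = true → ω' e = true) → f ω ≤ f ω')
    (hh : ∀ ω ω' : E → Bool, (∀ e, ω e = true → ω' e = true) → h ω ≤ h ω') :
    bexpect p f * bexpect p h ≤ noisedExpect p ε f h := by
  have hle : ∀ ω ω' : E → Bool, ω ≤ ω' → (∀ e, ω e = true → ω' e = true) := by
    intro ω ω' hle e he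
    have h2 := hle e
    rw [he] at h2
    exact top_le_iff.mp h2
  have hbot : ∀ e : E, (fun _ : E => false) e = true → False := fun e he => by simp at he
  have hμ0 : (0 : ((E → Bool) × (E → Bool)) → ℝ)
      ≤ fun a => probCfg p a.1 * noiseKernel p ε a.1 a.2 := by
    intro a
    have : (0:ℝ) ≤ ∏ e : E, pairw p ε (a.1 e) (a.2 e) :=
      Finset.prod_nonneg fun e _ => pairw_nonneg hp0.le hp1.le hε0 hε1 _ _
    rw [← nu_eq] at this
    exact this
  have hF0 : (0 : ((E → Bool) × (E → Bool)) → ℝ)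
      ≤ fun a => f a.1 - f (fun _ => false) :=
    fun a => sub_nonneg.2 (hf (fun _ => false) a.1 (fun e he => absurd he (by simp)))
  have hG0 : (0 : ((E → Bool) × (E → Bool)) → ℝ)
      ≤ fun a => h a.2 - h (fun _ => false) :=
    fun a => sub_nonneg.2 (hh (fun _ => false) a.2 (fun e he => absurd he (by simp)))
  have hFmono : Monotone fun a : (E → Bool) × (E → Bool) => f a.1 - f (fun _ => false) :=
    fun a b hab => sub_le_sub_right (hf a.1 b.1 (hle _ _ hab.1)) _
  have hGmono : Monotone fun a : (E → Bool) × (E → Bool) => h a.2 - h (fun _ => false) :=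
    fun a b hab => sub_le_sub_right (hh a.2 b.2 (hle _ _ hab.2)) _
  have hμsup : ∀ a b : (E → Bool) × (E → Bool),
      (probCfg p a.1 * noiseKernel p ε a.1 a.2) * (probCfg p b.1 * noiseKernel p ε b.1 b.2)
        ≤ (probCfg p (a ⊓ b).1 * noiseKernel p ε (a ⊓ b).1 (a ⊓ b).2)
          * (probCfg p (a ⊔ b).1 * noiseKernel p ε (a ⊔ b).1 (a ⊔ b).2) := by
    intro a b
    simp only [nu_eq, ← Finset.prod_mul_distrib]
    refine Finset.prod_le_prod (fun e _ => mul_nonneg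
        (pairw_nonneg hp0.le hp1.le hε0 hε1 _ _) (pairw_nonneg hp0.le hp1.le hε0 hε1 _ _))
      (fun e _ => ?_)
    exact pairw_supermod hp0.le hp1.le hε0 hε1 (a.1 e) (a.2 e) (b.1 e) (b.2 e)
  have key := fkg (fun a : (E → Bool) × (E → Bool) => f a.1 - f (fun _ => false))
    (fun a : (E → Bool) × (E → Bool) => h a.2 - h (fun _ => false))
    (fun a : (E → Bool) × (E → Bool) => probCfg p a.1 * noiseKernel p ε a.1 a.2)
    hμ0 hF0 hG0 hFmono hGmono hμsup
  beta_reduce at key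
  have E0 : ∑ a : (E → Bool) × (E → Bool), probCfg p a.1 * noiseKernel p ε a.1 a.2 = 1 := by
    rw [Fintype.sum_prod_type]
    exact sum_nu
  have E1 : ∑ a : (E → Bool) × (E → Bool),
      probCfg p a.1 * noiseKernel p ε a.1 a.2 * (f a.1 - f (fun _ => false))
        = bexpect p f - f (fun _ => false) := by
    rw [Fintype.sum_prod_type]
    exact (sum_nu_left (fun ω => f ω - f (fun _ => false))).trans
      (bexpect_sub_const f (f (fun _ => false)))
  have E2 : ∑ a : (E → Bool) × (E → Bool),
      probCfg p a.1 * noiseKernel p ε a.1 a.2 * (h a.2 - h (fun _ => false))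
        = bexpect p h - h (fun _ => false) := by
    rw [Fintype.sum_prod_type]
    exact (sum_nu_right (fun ω => h ω - h (fun _ => false))).trans
      (bexpect_sub_const h (h (fun _ => false)))
  have E3 : ∑ a : (E → Bool) × (E → Bool),
      probCfg p a.1 * noiseKernel p ε a.1 a.2
        * ((f a.1 - f (fun _ => false)) * (h a.2 - h (fun _ => false)))
        = noisedExpect p ε f h - h (fun _ => false) * bexpect p f
          - f (fun _ => false) * bexpect p h + f (fun _ => false) * h (fun _ => false) := by
    rw [Fintype.sum_prod_type]
    have hs := noised_shift (p := p) (ε := ε) f h (f (fun _ => false)) (h (fun _ => false))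
    rw [noisedExpect] at hs
    exact hs
  rw [E0, E1, E2, E3, one_mul] at key
  nlinarith [key]

end aux

/-- FKG comparison of noise correlations: if `f` and `g - f` are increasing, then
`E[g(ω)g(ω_ε)] - E[g(ω)]² ≥ E[f(ω)f(ω_ε)] - E[f(ω)]²`. -/
theorem fkg_noise_comparison {E : Type*} [Fintype E] [DecidableEq E] {p ε : ℝ}
    (hp0 : 0 < p) (hp1 : p < 1) (hε0 : 0 ≤ ε) (hε1 : ε ≤ 1)
    (f g : (E → Bool) → ℝ)
    (hf : ∀ ω ω' : E → Bool, (∀ e, ω e = true → ω' e = true) → f ω ≤ f ω')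
    (hgf : ∀ ω ω' : E → Bool, (∀ e, ω e = true → ω' e = true) →
      g ω - f ω ≤ g ω' - f ω') :
    noisedExpect p ε g g - (bexpect p g) ^ 2
      ≥ noisedExpect p ε f f - (bexpect p f) ^ 2 := by
  set h : (E → Bool) → ℝ := fun ω => g ω - f ω with hhdef
  have hh : ∀ ω ω' : E → Bool, (∀ e, ω e = true → ω' e = true) → h ω ≤ h ω' := by
    intro ω ω' hle
    exact hgf ω ω' hle
  have bdec : bexpect p g = bexpect p f + bexpect p h := by
    simp only [bexpect, hhdef, ← Finset.sum_add_distrib]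
    exact Finset.sum_congr rfl fun ω _ => by ring
  have ndec : noisedExpect p ε g g = noisedExpect p ε f f + noisedExpect p ε f h
      + noisedExpect p ε h f + noisedExpect p ε h h := by
    simp only [noisedExpect, hhdef, ← Finset.sum_add_distrib]
    exact Finset.sum_congr rfl fun ω _ => Finset.sum_congr rfl fun ω' _ => by ring
  have c1 : bexpect p f * bexpect p h ≤ noisedExpect p ε f h :=
    cov_noised_nonneg hp0 hp1 hε0 hε1 f h hf hh
  have c2 : bexpect p h * bexpect p h ≤ noisedExpect p ε h h :=
    cov_noised_nonneg hp0 hp1 hε0 hε1 h h hh hh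
  have csymm : noisedExpect p ε h f = noisedExpect p ε f h := noisedExpect_symm h f
  rw [ge_iff_le, bdec, ndec, csymm]
  nlinarith [c1, c2]
end
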